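/- Let F ⊆ ℕ² be a submonoid with extremal generators n₁, n₂ (ℚ-linearly independent, every element of F a nonnegative rational combination of them), and suppose int(C) = int(F) and both F ∩ τ₁ ≠ C ∩ τ₁ and the set (C \ F) ∩ τ₁ is finite and nonempty, where C = L_{ℚ≥0}({n₁,n₂}) ∩ ℕ² and τ₁ = ℚ≥0·n₁. Then F does not satisfy the combinatorial Cohen-Macaulay condition: there exists a ∈ C \ F with a + n₁ ∈ F and a + n₂ ∈ F. -/

import Mathlib

def toQ (p : ℤ × ℤ) : ℚ × ℚ := ((p.1 : ℚ), (p.2 : ℚ))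
def toR (p : ℤ × ℤ) : ℝ × ℝ := ((p.1 : ℝ), (p.2 : ℝ))
def isNat (p : ℤ × ℤ) : Prop := 0 ≤ p.1 ∧ 0 ≤ p.2
def inCone (n₁ n₂ a : ℤ × ℤ) : Prop :=
  ∃ q₁ q₂ : ℚ, 0 ≤ q₁ ∧ 0 ≤ q₂ ∧ toQ a = q₁ • toQ n₁ + q₂ • toQ n₂
def onRay (n a : ℤ × ℤ) : Prop := ∃ q : ℚ, 0 ≤ q ∧ toQ a = q • toQ n

lemma toQ_add (a b : ℤ × ℤ) : toQ (a + b) = toQ a + toQ b := by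
  simp [toQ, Prod.ext_iff]

lemma toQ_eq_zero {a : ℤ × ℤ} (h : toQ a = 0) : a = 0 := by
  have h1 : (a.1 : ℚ) = 0 := congrArg Prod.fst h
  have h2 : (a.2 : ℚ) = 0 := congrArg Prod.snd h
  have : a.1 = 0 := by exact_mod_cast h1
  have : a.2 = 0 := by exact_mod_cast h2
  exact Prod.ext ‹a.1 = 0› ‹a.2 = 0›

/-- Section 4 argument: if `int(C) = int(F)` but `(C \ F) ∩ τ₁` is finite and nonempty,
then `F` fails the combinatorial Cohen-Macaulay condition. -/
theorem stmt11 (F : AddSubmonoid (ℤ × ℤ)) (n₁ n₂ : ℤ × ℤ)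
    (hnat : ∀ s ∈ F, isNat s)
    (hind : LinearIndependent ℚ ![toQ n₁, toQ n₂])
    (hn₁ : n₁ ∈ F) (hn₂ : n₂ ∈ F)
    (hcone : ∀ s ∈ F, inCone n₁ n₂ s)
    (hint : ∀ a : ℤ × ℤ,
      (isNat a ∧ inCone n₁ n₂ a ∧ ¬ onRay n₁ a ∧ ¬ onRay n₂ a) ↔
      (a ∈ F ∧ ¬ onRay n₁ a ∧ ¬ onRay n₂ a))
    -- F ∩ τ₁ ≠ C ∩ τ₁, with (C \ F) ∩ τ₁ finite and nonempty
    (hfin : {a : ℤ × ℤ | isNat a ∧ inCone n₁ n₂ a ∧ a ∉ F ∧ onRay n₁ a}.Finite)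
    (hne : {a : ℤ × ℤ | isNat a ∧ inCone n₁ n₂ a ∧ a ∉ F ∧ onRay n₁ a}.Nonempty) :
    ∃ a : ℤ × ℤ, isNat a ∧ inCone n₁ n₂ a ∧ a ∉ F ∧ a + n₁ ∈ F ∧ a + n₂ ∈ F := by
  obtain ⟨hn2ne, hpair⟩ := linearIndependent_fin2.mp hind
  simp only [Matrix.cons_val_one, Matrix.head_cons, Matrix.cons_val_zero] at hn2ne hpair
  have hn1ne : toQ n₁ ≠ 0 := by
    intro h
    exact hpair 0 (by simp [h])
  have hnotmul : ∀ c : ℚ, toQ n₂ ≠ c • toQ n₁ := by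
    intro c hc
    rcases eq_or_ne c 0 with rfl | hc0
    · simp at hc; exact hn2ne hc
    · apply hpair c⁻¹
      rw [hc, smul_smul, inv_mul_cancel₀ hc0, one_smul]
  obtain ⟨a, ha, hmax⟩ := hfin.exists_maximalFor (fun p => p.1 + p.2) _ hne
  obtain ⟨haN, haC, haF, q, hq0, hq⟩ := ha
  -- q > 0
  have hqpos : 0 < q := by
    rcases lt_or_eq_of_le hq0 with h | h
    · exact h
    · exfalso
      apply haF
      have : toQ a = 0 := by rw [hq, ← h, zero_smul]
      rw [toQ_eq_zero this]
      exact F.zero_mem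
  -- n₁ properties
  obtain ⟨hn11, hn12⟩ := hnat n₁ hn₁
  obtain ⟨hn21, hn22⟩ := hnat n₂ hn₂
  have hn1sum : 0 < n₁.1 + n₁.2 := by
    rcases lt_or_eq_of_le (add_nonneg hn11 hn12) with h | h
    · exact h
    · exfalso
      apply hn1ne
      have h1 : n₁.1 = 0 := by omega
      have h2 : n₁.2 = 0 := by omega
      simp [toQ, h1, h2, Prod.ext_iff]
  -- step 1 : a + n₁ ∈ F
  have hstep1 : a + n₁ ∈ F := by
    by_contra hcon
    have hmem : (a + n₁) ∈ {a : ℤ × ℤ | isNat a ∧ inCone n₁ n₂ a ∧ a ∉ F ∧ onRay n₁ a} := by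
      refine ⟨⟨add_nonneg haN.1 hn11, add_nonneg haN.2 hn12⟩, ⟨q + 1, 0, by positivity, le_refl _, ?_⟩, hcon, ⟨q + 1, by positivity, ?_⟩⟩
      · rw [toQ_add, hq, zero_smul, add_zero, add_smul, one_smul]
      · rw [toQ_add, hq, add_smul, one_smul]
    have hle : (fun p : ℤ × ℤ => p.1 + p.2) a ≤ (fun p : ℤ × ℤ => p.1 + p.2) (a + n₁) := by
      simp only [Prod.fst_add, Prod.snd_add]; omega
    have := hmax (j := a + n₁) hmem hle
    simp only [Prod.fst_add, Prod.snd_add] at this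
    omega
  -- step 2 : a + n₂ ∈ F
  have hstep2 : a + n₂ ∈ F := by
    have hnr1 : ¬ onRay n₁ (a + n₂) := by
      rintro ⟨r, _, hr⟩
      rw [toQ_add, hq] at hr
      apply hnotmul (r - q)
      rw [sub_smul, ← hr]; abel
    have hnr2 : ¬ onRay n₂ (a + n₂) := by
      rintro ⟨r, _, hr⟩
      rw [toQ_add, hq] at hr
      have : q • toQ n₁ = (r - 1) • toQ n₂ := by
        rw [sub_smul, ← hr, one_smul]; abel
      apply hpair (q⁻¹ * (r - 1))
      rw [mul_smul, ← this, smul_smul, inv_mul_cancel₀ (ne_of_gt hqpos), one_smul]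
    exact ((hint (a + n₂)).mp ⟨⟨add_nonneg haN.1 hn21, add_nonneg haN.2 hn22⟩,
      ⟨q, 1, hq0, zero_le_one, by rw [toQ_add, hq, one_smul]⟩, hnr1, hnr2⟩).1
  exact ⟨a, haN, haC, haF, hstep1, hstep2⟩
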